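/- arXiv:1104.4367 — 3 statements merged into one kernel-verified Lean document; each statement's English description precedes it below -/
import Mathlib

section
/- Every connected graph H on at least 3 vertices contains a path or a cycle of length at least min(2·δ(H), |V(H)|), where the length of a path or cycle is the number of its edges. -/
open SimpleGraph Walk

namespace SimpleGraph.Walk
variable {V : Type} {G : SimpleGraph V}

lemma getVert_eq_support_getElem' : ∀ {u v : V} (p : G.Walk u v) {i : ℕ}
    (hi : i < p.support.length), p.getVert i = p.support[i]
  | u, _, Walk.nil, i, hi => by
      simp [Walk.support_nil] at hi; subst hi; simp [Walk.support_nil]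
  | u, v, Walk.cons h q, i, hi => by
      cases i with
      | zero => simp
      | succ n =>
        simp only [Walk.support_cons, Walk.getVert_cons_succ] at *
        rw [List.getElem_cons_succ]
        exact getVert_eq_support_getElem' q (by simpa using hi)

lemma IsPath.getVert_inj' {u v : V} {p : G.Walk u v} (hp : p.IsPath) {i j : ℕ}
    (hi : i ≤ p.length) (hj : j ≤ p.length) (h : p.getVert i = p.getVert j) : i = j := by
  have hi' : i < p.support.length := by rw [Walk.length_support]; omega
  have hj' : j < p.support.length := by rw [Walk.length_support]; omega
  rw [getVert_eq_support_getElem' p hi', getVert_eq_support_getElem' p hj'] at h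
  exact (List.Nodup.getElem_inj_iff hp.support_nodup).mp h

lemma exists_crossing_adj {u w : V} (q : G.Walk u w) (L : List V)
    (hu : u ∈ L) (hw : w ∉ L) : ∃ x y, G.Adj x y ∧ x ∈ L ∧ y ∉ L := by
  induction q with
  | nil => exact absurd hu hw
  | @cons a b c h q ih =>
    by_cases hb : b ∈ L
    · exact ih hb hw
    · exact ⟨a, b, h, hu, hb⟩

end SimpleGraph.Walk

/-- Every connected graph `H` on at least 3 vertices contains a path or a cycle of
length (number of edges) at least `min (2 * δ(H)) |V(H)|`. -/
theorem stmt_0 {V : Type} [Fintype V] [DecidableEq V] (H : SimpleGraph V)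
    [DecidableRel H.Adj] (hconn : H.Connected) (h3 : 3 ≤ Fintype.card V) :
    (∃ (u v : V) (p : H.Walk u v), p.IsPath ∧
      min (2 * H.minDegree) (Fintype.card V) ≤ p.length) ∨
    (∃ (u : V) (c : H.Walk u u), c.IsCycle ∧
      min (2 * H.minDegree) (Fintype.card V) ≤ c.length) := by
  classical
  set n := Fintype.card V with hn
  set d := H.minDegree with hd
  have hlen_le : ∀ {u v : V} (q : H.Walk u v), q.IsPath → q.length ≤ n :=
    fun q hq => (hq.length_lt).le
  let P : ℕ → Prop := fun l => ∃ (u v : V) (q : H.Walk u v), q.IsPath ∧ q.length = l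
  have hP0 : P 0 := by
    obtain ⟨x⟩ := hconn.nonempty
    exact ⟨x, x, Walk.nil, Walk.IsPath.nil, rfl⟩
  set k := Nat.findGreatest P n with hkdef
  have hk : P k := Nat.findGreatest_spec (Nat.zero_le n) hP0
  have hmax : ∀ {u v : V} (q : H.Walk u v), q.IsPath → q.length ≤ k :=
    fun q hq => Nat.le_findGreatest (hlen_le q hq) ⟨_, _, q, hq, rfl⟩
  obtain ⟨v0, vk, p, hp, hpk⟩ := hk
  -- neighbors of the endpoints lie on p
  have hnb0 : ∀ w, H.Adj v0 w → w ∈ p.support := by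
    intro w hw
    by_contra hws
    have hgood : (Walk.cons hw.symm p).IsPath := hp.cons hws
    have := hmax _ hgood
    simp [Walk.length_cons, hpk] at this
  have hnbk : ∀ w, H.Adj vk w → w ∈ p.support := by
    intro w hw
    by_contra hws
    have hws' : w ∉ p.reverse.support := by
      rwa [Walk.support_reverse, List.mem_reverse]
    have hgood : (Walk.cons hw.symm p.reverse).IsPath := hp.reverse.cons hws'
    have := hmax _ hgood
    simp [Walk.length_cons, hpk] at this
  have hnontriv : Nontrivial V := Fintype.one_lt_card_iff_nontrivial.mp (by omega)
  -- k ≥ 1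
  have hk1 : 1 ≤ k := by
    obtain ⟨w, hwne⟩ := exists_ne v0
    obtain ⟨x, y, hxy, hxL, hyL⟩ := exists_crossing_adj ((hconn v0 w).some) [v0]
      (by simp) (by simpa using hwne)
    have hx : x = v0 := by simpa using hxL
    subst hx
    have hpath : (Walk.cons hxy Walk.nil).IsPath := by
      simp [Walk.isPath_def, hxy.ne]
    have := hmax _ hpath
    simpa using this
  -- k ≥ 2
  have hk2 : 2 ≤ k := by
    by_contra hlt
    have hkeq : k = 1 := by omega
    have hlen1 : p.length = 1 := by omega
    have hadj01 : H.Adj v0 vk := by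
      have := p.adj_getVert_succ (i := 0) (by omega)
      rwa [Walk.getVert_zero, show (0+1 : ℕ) = p.length by omega, Walk.getVert_length] at this
    have hsupmem : ∀ z, z ∈ p.support → z = v0 ∨ z = vk := by
      intro z hz
      rw [Walk.mem_support_iff_exists_getVert] at hz
      obtain ⟨j, hj1, hj2⟩ := hz
      have : j = 0 ∨ j = 1 := by omega
      rcases this with rfl | rfl
      · left; rw [← hj1, Walk.getVert_zero]
      · right; rw [← hj1, show (1:ℕ) = p.length from hlen1.symm, Walk.getVert_length]
    have hex : ∃ w, w ∉ p.support := by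
      by_contra hcon
      push_neg at hcon
      have hsub : (Finset.univ : Finset V) ⊆ p.support.toFinset := fun z _ => by
        simpa using hcon z
      have hle := Finset.card_le_card hsub
      have hfin : p.support.toFinset.card ≤ p.support.length := List.toFinset_card_le _
      rw [Walk.length_support, hlen1] at hfin
      simp only [Finset.card_univ] at hle
      omega
    obtain ⟨w, hw⟩ := hex
    obtain ⟨x, y, hxy, hxL, hyL⟩ := exists_crossing_adj ((hconn v0 w).some) p.support
      (Walk.start_mem_support p) hw
    have hyv0 : y ≠ v0 := fun h => hyL (h ▸ Walk.start_mem_support p)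
    have hyvk : y ≠ vk := fun h => hyL (h ▸ Walk.end_mem_support p)
    rcases hsupmem x hxL with rfl | rfl
    · have hpath : (Walk.cons hxy.symm (Walk.cons hadj01 Walk.nil)).IsPath := by
        simp [Walk.isPath_def, hyv0, hyvk, hadj01.ne]
      have := hmax _ hpath
      simp [hkeq] at this
    · have hpath : (Walk.cons hxy.symm (Walk.cons hadj01.symm Walk.nil)).IsPath := by
        simp [Walk.isPath_def, hyv0, hyvk, hadj01.ne']
      have := hmax _ hpath
      simp [hkeq] at this
  rcases le_or_gt (min (2 * d) n) k with hge | hlt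
  · exact Or.inl ⟨v0, vk, p, hp, by omega⟩
  have hk2d : k < 2 * d := lt_of_lt_of_le hlt (min_le_left _ _)
  have hkn : k < n := lt_of_lt_of_le hlt (min_le_right _ _)
  -- an index function on the support
  have hchoice : ∀ w : V, ∃ i, (w ∈ p.support → i ≤ p.length ∧ p.getVert i = w) := by
    intro w
    by_cases hw : w ∈ p.support
    · rw [Walk.mem_support_iff_exists_getVert] at hw
      obtain ⟨j, h1, h2⟩ := hw
      exact ⟨j, fun _ => ⟨h2, h1⟩⟩
    · exact ⟨0, fun h => absurd h hw⟩
  choose idx hidx using hchoice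
  -- pigeonhole sets
  set A : Finset ℕ := (Finset.range k).filter (fun i => H.Adj v0 (p.getVert (i+1))) with hA
  set B : Finset ℕ := (Finset.range k).filter (fun i => H.Adj vk (p.getVert i)) with hB
  have hdA : d ≤ A.card := by
    have hcard : d ≤ (H.neighborFinset v0).card := H.minDegree_le_degree v0
    refine le_trans hcard (Finset.card_le_card_of_injOn (fun w => idx w - 1) ?_ ?_)
    · intro w hw
      show idx w - 1 ∈ A
      rw [Finset.mem_coe, SimpleGraph.mem_neighborFinset] at hw
      obtain ⟨hle, hget⟩ := hidx w (hnb0 w hw)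
      have hne0 : idx w ≠ 0 := by
        intro h0
        rw [h0, Walk.getVert_zero] at hget
        exact hw.ne' hget.symm
      rw [hA, Finset.mem_filter, Finset.mem_range]
      constructor
      · omega
      · have hplus : idx w - 1 + 1 = idx w := by omega
        rw [hplus, hget]; exact hw
    · intro w hw w' hw' heq
      have heq' : idx w - 1 = idx w' - 1 := heq
      rw [Finset.mem_coe, SimpleGraph.mem_neighborFinset] at hw hw'
      obtain ⟨hle, hget⟩ := hidx w (hnb0 w hw)
      obtain ⟨hle', hget'⟩ := hidx w' (hnb0 w' hw')
      have hne0 : idx w ≠ 0 := by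
        intro h0; rw [h0, Walk.getVert_zero] at hget; exact hw.ne' hget.symm
      have hne0' : idx w' ≠ 0 := by
        intro h0; rw [h0, Walk.getVert_zero] at hget'; exact hw'.ne' hget'.symm
      have : idx w = idx w' := by omega
      rw [← hget, ← hget', this]
  have hdB : d ≤ B.card := by
    have hcard : d ≤ (H.neighborFinset vk).card := H.minDegree_le_degree vk
    refine le_trans hcard (Finset.card_le_card_of_injOn (fun w => idx w) ?_ ?_)
    · intro w hw
      show idx w ∈ B
      rw [Finset.mem_coe, SimpleGraph.mem_neighborFinset] at hw
      obtain ⟨hle, hget⟩ := hidx w (hnbk w hw)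
      have hnek : idx w ≠ p.length := by
        intro h0
        rw [h0, Walk.getVert_length] at hget
        exact hw.ne' hget.symm
      rw [hB, Finset.mem_filter, Finset.mem_range]
      exact ⟨by omega, by rw [hget]; exact hw⟩
    · intro w hw w' hw' heq
      have heq' : idx w = idx w' := heq
      rw [Finset.mem_coe, SimpleGraph.mem_neighborFinset] at hw hw'
      obtain ⟨hle, hget⟩ := hidx w (hnbk w hw)
      obtain ⟨hle', hget'⟩ := hidx w' (hnbk w' hw')
      rw [← hget, ← hget', heq']
  have hAB : (A ∩ B).Nonempty := by
    rw [← Finset.card_pos]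
    have hun : (A ∪ B).card ≤ k := by
      have : A ∪ B ⊆ Finset.range k := by
        rw [hA, hB]
        exact Finset.union_subset (Finset.filter_subset _ _) (Finset.filter_subset _ _)
      simpa using Finset.card_le_card this
    have := Finset.card_union_add_card_inter A B
    omega
  obtain ⟨i, hiAB⟩ := hAB
  rw [Finset.mem_inter, hA, hB, Finset.mem_filter, Finset.mem_filter, Finset.mem_range] at hiAB
  obtain ⟨⟨hik, hadj0⟩, _, hadjk⟩ := hiAB
  -- split p at the vertex a = p.getVert i
  have hamem : p.getVert i ∈ p.support :=
    Walk.mem_support_iff_exists_getVert.mpr ⟨i, rfl, by omega⟩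
  set p1 := p.takeUntil _ hamem with hp1def
  set r := p.dropUntil _ hamem with hrdef
  have hspec : p1.append r = p := p.take_spec hamem
  have hp1path : p1.IsPath := hp.takeUntil hamem
  have hp1le : p1.length ≤ p.length := Walk.length_takeUntil_le p hamem
  have hp1len : p1.length = i := by
    have hg : ∀ j, p.getVert j = (p1.append r).getVert j := fun j => by rw [hspec]
    have h1 : p.getVert p1.length = p.getVert i := by
      rw [hg p1.length, Walk.getVert_append]
      simp
    exact hp.getVert_inj' hp1le (by omega) h1
  have hrlen : p1.length + r.length = p.length := by
    have := congrArg Walk.length hspec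
    rw [Walk.length_append] at this
    omega
  have havk : p.getVert i ≠ vk := by
    intro h
    have : i = p.length := hp.getVert_inj' (by omega) le_rfl (by rw [Walk.getVert_length]; exact h)
    omega
  obtain ⟨x, hax, r'', hreq⟩ := r.exists_eq_cons_of_ne havk
  have hxb : x = p.getVert (i+1) := by
    have h1 : p.getVert (i+1) = r.getVert 1 := by
      have hg : p.getVert (i+1) = (p1.append r).getVert (i+1) := by rw [hspec]
      rw [hg, Walk.getVert_append, hp1len]
      simp
    rw [h1, hreq]; simp
  subst hxb
  -- support decomposition and disjointness
  have hsupp : p.support = p1.support ++ r''.support := by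
    have hg := congrArg Walk.support hspec
    rw [← hg, Walk.support_append, hreq, Walk.support_cons, List.tail_cons]
  have hnd := hp.support_nodup
  rw [hsupp, List.nodup_append'] at hnd
  obtain ⟨hnd1, hnd2, hdisj⟩ := hnd
  -- the cycle
  set q : H.Walk (p.getVert (i+1)) v0 := r''.append (Walk.cons hadjk p1.reverse) with hqdef
  have hqsupp : q.support = r''.support ++ p1.support.reverse := by
    rw [hqdef, Walk.support_append, Walk.support_cons, List.tail_cons, Walk.support_reverse]
  have hqnodup : q.support.Nodup := by
    rw [hqsupp, List.nodup_append']
    exact ⟨hnd2, List.nodup_reverse.mpr hnd1,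
      fun a ha hb => hdisj (List.mem_reverse.mp hb) ha⟩
  have hqpath : q.IsPath := Walk.IsPath.mk' hqnodup
  have hedge : s(v0, p.getVert (i+1)) ∉ q.edges := by
    rw [hqdef, Walk.edges_append, Walk.edges_cons]
    intro hmem
    rcases List.mem_append.mp hmem with h1 | h2
    · exact hdisj (Walk.start_mem_support p1) (Walk.fst_mem_support_of_mem_edges r'' h1)
    · rcases List.mem_cons.mp h2 with h3 | h4
      · rw [Sym2.eq_iff] at h3
        rcases h3 with ⟨h5, h6⟩ | ⟨h5, h6⟩
        · have : (0:ℕ) = p.length := hp.getVert_inj' (by omega) le_rfl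
            (by rw [Walk.getVert_zero, Walk.getVert_length]; exact h5)
          omega
        · have hi0 : (0:ℕ) = i := hp.getVert_inj' (by omega) (by omega)
            (by rw [Walk.getVert_zero]; exact h5)
          have hik' : i + 1 = p.length := hp.getVert_inj' (by omega) le_rfl
            (by rw [Walk.getVert_length]; exact h6)
          omega
      · rw [Walk.edges_reverse, List.mem_reverse] at h4
        exact hdisj (Walk.snd_mem_support_of_mem_edges p1 h4) (Walk.start_mem_support r'')
  set c : H.Walk v0 v0 := Walk.cons hadj0 q with hcdef
  have hcyc : c.IsCycle := (Walk.cons_isCycle_iff q hadj0).mpr ⟨hqpath, hedge⟩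
  have hr''len : i + (r''.length + 1) = k := by
    have h1 := hrlen
    rw [hreq, Walk.length_cons, hp1len, hpk] at h1
    omega
  have hclen : c.length = k + 1 := by
    rw [hcdef, Walk.length_cons, hqdef, Walk.length_append, Walk.length_cons,
      Walk.length_reverse, hp1len]
    omega
  -- last part: either the cycle is spanning, or we can extend to a longer path
  have hctail : c.support.tail.Nodup := ((Walk.isCycle_def c).mp hcyc).2.2
  have hctl : c.support.tail.length = k + 1 := by
    have h1 := Walk.length_support c
    rw [hclen] at h1
    simp only [List.length_tail, h1]
    omega
  by_cases hkn1 : k + 1 = n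
  · refine Or.inr ⟨v0, c, hcyc, ?_⟩
    have := min_le_right (2 * d) n
    omega
  · exfalso
    have hex : ∃ w, w ∉ c.support := by
      by_contra hcon
      push_neg at hcon
      have hv0tail : v0 ∈ c.support.tail := by
        rw [hcdef, Walk.support_cons, List.tail_cons]
        exact Walk.end_mem_support q
      have hall : ∀ w, w ∈ c.support.tail := by
        intro w
        have := hcon w
        rw [Walk.support_eq_cons, List.mem_cons] at this
        rcases this with rfl | h
        · exact hv0tail
        · exact h
      have hsub : (Finset.univ : Finset V) ⊆ c.support.tail.toFinset := fun z _ => by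
        simpa using hall z
      have hle := Finset.card_le_card hsub
      have hfin : c.support.tail.toFinset.card ≤ c.support.tail.length :=
        List.toFinset_card_le _
      simp only [Finset.card_univ] at hle
      omega
    obtain ⟨w, hw⟩ := hex
    obtain ⟨x, y, hxy, hxc, hyc⟩ := exists_crossing_adj ((hconn v0 w).some) c.support
      (Walk.start_mem_support c) hw
    set c' := c.rotate x hxc with hc'def
    have hc'cyc : c'.IsCycle := hcyc.rotate hxc
    have hc'len : c'.length = k + 1 := by
      rw [hc'def, Walk.rotate, Walk.length_append]
      have := congrArg Walk.length (c.take_spec hxc)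
      rw [Walk.length_append] at this
      omega
    have hyc' : y ∉ c'.support := by
      rw [Walk.support_eq_cons, List.mem_cons]
      rintro (rfl | hmem)
      · exact hyc hxc
      · have hrot := Walk.support_rotate c x hxc
        rw [← hc'def] at hrot
        have : y ∈ c.support.tail := hrot.mem_iff.mp hmem
        exact hyc (List.mem_of_mem_tail this)
    have hc'nil : ¬ c'.Nil := by
      rw [Walk.not_nil_iff_lt_length, hc'len]; omega
    obtain ⟨z, hxz, dd, hddeq⟩ := Walk.not_nil_iff.mp hc'nil
    have hddpath : dd.IsPath := by
      rw [hddeq] at hc'cyc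
      exact ((Walk.cons_isCycle_iff dd hxz).mp hc'cyc).1
    have hddlen : dd.length = k := by
      have := hc'len
      rw [hddeq, Walk.length_cons] at this
      omega
    have hynd : y ∉ dd.reverse.support := by
      rw [Walk.support_reverse, List.mem_reverse]
      intro hmem
      apply hyc'
      rw [hddeq, Walk.support_cons]
      exact List.mem_cons_of_mem _ hmem
    have hnewpath : (Walk.cons hxy.symm dd.reverse).IsPath := hddpath.reverse.cons hynd
    have := hmax _ hnewpath
    rw [Walk.length_cons, Walk.length_reverse, hddlen] at this
    omega
end

section
/- If H is a graph whose circumference (length of a longest cycle) l satisfies l > |V(H)| − δ(H), then l ≥ min(2·δ(H), |V(H)|). -/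
open SimpleGraph

lemma count_lemma (l t : ℕ) [NeZero l] (B : Finset (ZMod l))
    (hl : 2*t + 4 ≤ l)
    (x : ZMod l)
    (hB2 : ∀ j ∈ B, ∀ j' ∈ B, j ≠ j' → 2 ≤ ((j' - j : ZMod l)).val)
    (hAB : ∀ j ∈ B, j ≠ x → t + 2 ≤ ((j - x : ZMod l)).val ∧ t + 2 ≤ ((x - j : ZMod l)).val) :
    2 * B.card + 2 * t ≤ l := by
  classical
  have hl0 : 0 < l := by omega
  have hval : ∀ m : ℕ, m < l → ((m : ZMod l)).val = m := fun m hm => ZMod.val_natCast_of_lt hm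
  set U : Finset (ZMod l) := B.biUnion (fun j => {j, j + 1}) with hU
  have hone : ((1 : ZMod l)).val = 1 := by
    have := hval 1 (by omega); simpa using this
  have hself : ∀ j : ZMod l, j ≠ j + 1 := by
    intro j h
    have h1 : ((1 : ZMod l)).val = 0 := by
      have : (1 : ZMod l) = 0 := by
        have := congrArg (fun w => w - j) h
        simpa [sub_eq_iff_eq_add] using this.symm
      rw [this, ZMod.val_zero]
    rw [hone] at h1; omega
  have hUcard : U.card = 2 * B.card := by
    rw [hU, Finset.card_biUnion]
    · have hc : ∀ j : ZMod l, ({j, j+1} : Finset (ZMod l)).card = 2 := by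
        intro j
        rw [Finset.card_insert_of_notMem (by simp [hself j]), Finset.card_singleton]
      simp only [hc]
      rw [Finset.sum_const, smul_eq_mul]; ring
    · intro j hj j' hj' hne
      simp only [Finset.disjoint_left, Finset.mem_insert, Finset.mem_singleton]
      intro a h1 h2
      rcases h1 with h1 | h1 <;> rcases h2 with h2 | h2
      · exact hne (h1 ▸ h2 ▸ rfl)
      · have hb := hB2 j' hj' j hj (Ne.symm hne)
        rw [show j = j' + 1 from h1 ▸ h2, add_sub_cancel_left, hone] at hb
        omega
      · have hb := hB2 j hj j' hj' hne
        rw [show j' = j + 1 from h2 ▸ h1, add_sub_cancel_left, hone] at hb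
        omega
      · apply hne
        have : j + 1 = j' + 1 := h1 ▸ h2 ▸ rfl
        have := congrArg (fun w => w - 1) this
        simpa using this
  set z : ZMod l := x - ((t+1 : ℕ) : ZMod l) with hz
  set W : Finset (ZMod l) := (Finset.range (2*t+3)).image (fun m : ℕ => z + (m : ZMod l)) with hW
  have hWcard : W.card = 2*t+3 := by
    rw [hW, Finset.card_image_of_injOn, Finset.card_range]
    intro m hm m' hm' hmm
    simp only [Finset.mem_coe, Finset.mem_range] at hm hm'
    have h1 : ((m : ZMod l)) = (m' : ZMod l) := by
      have := congrArg (fun w => w - z) hmm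
      simpa using this
    have := congrArg ZMod.val h1
    rwa [hval m (by omega), hval m' (by omega)] at this
  have hsub : U ∩ W ⊆ {z, x, x + 1} := by
    intro w hw
    rw [Finset.mem_inter] at hw
    obtain ⟨hwU, hwW⟩ := hw
    rw [hW, Finset.mem_image] at hwW
    obtain ⟨m, hm, rfl⟩ := hwW
    rw [Finset.mem_range] at hm
    rw [hU, Finset.mem_biUnion] at hwU
    obtain ⟨j, hj, hjw⟩ := hwU
    simp only [Finset.mem_insert, Finset.mem_singleton] at hjw ⊢
    have hxz : x = z + ((t+1 : ℕ) : ZMod l) := by rw [hz]; ring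
    rcases hjw with hjw | hjw
    · by_cases hjx : j = x
      · right; left; rw [hjw, hjx]
      · exfalso
        obtain ⟨hd1, hd2⟩ := hAB _ hj hjx
        by_cases hmt : m ≤ t + 1
        · have he : x - j = (((t+1) - m : ℕ) : ZMod l) := by
            rw [← hjw, hxz]
            push_cast [Nat.cast_sub hmt]
            ring
          rw [he, hval _ (by omega)] at hd2
          omega
        · have he : j - x = ((m - (t+1) : ℕ) : ZMod l) := by
            rw [← hjw, hxz]
            push_cast [Nat.cast_sub (by omega : t+1 ≤ m)]
            ring
          rw [he, hval _ (by omega)] at hd1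
          omega
    · by_cases hjx : j = x
      · right; right; rw [hjw, hjx]
      · by_cases hm0 : m = 0
        · left; rw [hm0]; simp
        · exfalso
          obtain ⟨hd1, hd2⟩ := hAB _ hj hjx
          have hjval : j = z + (m : ZMod l) - 1 := by
            have := congrArg (fun w => w - 1) hjw
            simpa using this.symm
          by_cases hmt : m ≤ t + 2
          · have he : x - j = (((t+2) - m : ℕ) : ZMod l) := by
              rw [hjval, hxz]
              push_cast [Nat.cast_sub hmt]
              ring
            rw [he, hval _ (by omega)] at hd2
            omega
          · have he : j - x = ((m - (t+2) : ℕ) : ZMod l) := by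
              rw [hjval, hxz]
              push_cast [Nat.cast_sub (by omega : t+2 ≤ m)]
              ring
            rw [he, hval _ (by omega)] at hd1
            omega
  have hcard3 : ({z, x, x+1} : Finset (ZMod l)).card ≤ 3 := by
    apply le_trans (Finset.card_insert_le _ _)
    have h2 := Finset.card_insert_le x ({x+1} : Finset (ZMod l))
    simp only [Finset.card_singleton] at h2
    omega
  have hUW : (U ∪ W).card ≤ l := by
    have := Finset.card_le_univ (U ∪ W)
    rwa [ZMod.card l] at this
  have hsum := Finset.card_union_add_card_inter U W
  have hint : (U ∩ W).card ≤ 3 := le_trans (Finset.card_le_card hsub) hcard3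
  omega

lemma val_sub_add {l : ℕ} [NeZero l] {i j : ZMod l} (h : i ≠ j) :
    ((j - i : ZMod l)).val + ((i - j : ZMod l)).val = l := by
  have h0 : (j - i : ZMod l) ≠ 0 := sub_ne_zero.2 (Ne.symm h)
  have he : (i - j : ZMod l) = -(j - i) := by ring
  rw [he, ZMod.neg_val, if_neg h0]
  have := ZMod.val_lt (j - i : ZMod l)
  omega

lemma arcwalk {V : Type} {H : SimpleGraph V} {l : ℕ} [NeZero l]
    (g : ZMod l → V) (hadj : ∀ i, H.Adj (g i) (g (i+1))) (i : ZMod l) (k : ℕ) :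
    ∃ w : H.Walk (g i) (g (i + (k : ZMod l))),
      w.length = k ∧ w.support = (List.range (k+1)).map (fun m : ℕ => g (i + (m : ZMod l))) := by
  induction k with
  | zero => exact ⟨(Walk.nil.copy rfl (by simp)), by simp, by simp [List.range_succ]⟩
  | succ k ih =>
    obtain ⟨w, hwl, hws⟩ := ih
    have he : (i + ((k : ℕ) : ZMod l)) + 1 = i + (((k+1 : ℕ)) : ZMod l) := by push_cast; ring
    refine ⟨(w.concat (hadj _)).copy rfl (congrArg g he), ?_, ?_⟩
    · rw [Walk.length_copy, Walk.length_concat, hwl]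
    · rw [Walk.support_copy, Walk.support_concat, hws]
      conv_rhs => rw [List.range_succ]
      rw [List.map_append]
      congr 2
      simp [congrArg g he]

lemma surg {V : Type} {H : SimpleGraph V} {l : ℕ} [NeZero l]
    (hmax : ∀ (w : V) (d : H.Walk w w), d.IsCycle → d.length ≤ l)
    (C : Set V)
    (g : ZMod l → V) (hadj : ∀ i, H.Adj (g i) (g (i+1)))
    (hginj : Function.Injective g) (hgmem : ∀ i, g i ∈ C)
    {i j : ZMod l} (hij : i ≠ j) {a b : V} (P : H.Walk a b) (hP : P.IsPath)
    (hPoff : ∀ v ∈ P.support, v ∉ C)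
    (h1 : H.Adj (g i) a) (h2 : H.Adj b (g j)) :
    P.length + 2 ≤ ((j - i : ZMod l)).val := by
  classical
  set k := ((i - j : ZMod l)).val with hk
  have hk0 : 0 < k := ZMod.val_pos.2 (sub_ne_zero.2 hij)
  have hkl : k < l := ZMod.val_lt _
  obtain ⟨R0, hR0l, hR0s⟩ := arcwalk g hadj j k
  have he : j + ((k : ℕ) : ZMod l) = i := by
    rw [hk, ZMod.natCast_zmod_val]; ring
  set R : H.Walk (g j) (g i) := R0.copy rfl (congrArg g he) with hR
  have hRs : R.support = (List.range (k+1)).map (fun m : ℕ => g (j + (m : ZMod l))) := by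
    rw [hR, Walk.support_copy]; exact hR0s
  have hRl : R.length = k := by rw [hR, Walk.length_copy]; exact hR0l
  have hRnd : R.support.Nodup := by
    rw [hRs]
    apply List.Nodup.map_on _ List.nodup_range
    intro m hm m' hm' hmm
    rw [List.mem_range] at hm hm'
    have h1 : j + ((m : ℕ) : ZMod l) = j + ((m' : ℕ) : ZMod l) := hginj hmm
    have h2 : ((m : ℕ) : ZMod l) = ((m' : ℕ) : ZMod l) := by
      have := congrArg (fun w => w - j) h1
      simpa using this
    have := congrArg ZMod.val h2
    rwa [ZMod.val_natCast_of_lt (by omega), ZMod.val_natCast_of_lt (by omega)] at this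
  have hRpath : R.IsPath := Walk.IsPath.mk' hRnd
  have hRsubC : ∀ v ∈ R.support, v ∈ C := by
    rw [hRs]
    intro v hv
    rw [List.mem_map] at hv
    obtain ⟨m, _, rfl⟩ := hv
    exact hgmem _
  have hgjR : g j ∉ R.support.tail := by
    have := R.support_eq_cons
    intro hmem
    have := hRnd
    rw [R.support_eq_cons] at this
    exact (List.nodup_cons.1 this).1 hmem
  -- the replacement path Q
  set Q : H.Walk (g i) (g j) := Walk.cons h1 (P.concat h2) with hQ
  have hQs : Q.support = g i :: (P.support ++ [g j]) := by
    rw [hQ, Walk.support_cons, Walk.support_concat]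
  have hginotP : g i ∉ P.support := fun h => hPoff _ h (hgmem i)
  have hgjnotP : g j ∉ P.support := fun h => hPoff _ h (hgmem j)
  have hgij : g i ≠ g j := fun h => hij (hginj h)
  have hQtail : Q.support.tail = P.support ++ [g j] := by rw [hQs]; rfl
  have hQnd : Q.support.Nodup := by
    rw [hQs, List.nodup_cons, List.nodup_append]
    refine ⟨?_, hP.support_nodup, List.nodup_singleton _, ?_⟩
    · rw [List.mem_append, List.mem_singleton]
      rintro (h | h)
      · exact hginotP h
      · exact hgij h
    · intro v hv
      intro b hb; rw [List.mem_singleton] at hb; subst hb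
      rintro rfl
      exact hgjnotP hv
  have hQpath : Q.IsPath := Walk.IsPath.mk' hQnd
  have hQl : Q.length = P.length + 2 := by
    rw [hQ, Walk.length_cons, Walk.length_concat]
  have hQe : Q.edges = s(g i, a) :: (P.edges ++ [s(b, g j)]) := by
    rw [hQ, Walk.edges_cons, Walk.edges_concat, List.concat_eq_append]
  -- the new closed walk
  set W : H.Walk (g i) (g i) := Q.append R with hW
  have hdisj : ∀ e, e ∈ Q.edges → e ∉ R.edges := by
    intro e
    induction e using Sym2.ind with
    | _ x y =>
      intro hq hr
      have hx : x ∈ C := hRsubC _ (R.fst_mem_support_of_mem_edges hr)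
      have hy : y ∈ C := hRsubC _ (R.snd_mem_support_of_mem_edges hr)
      rw [hQe, List.mem_cons, List.mem_append, List.mem_singleton] at hq
      rcases hq with hq | hq | hq
      · rw [Sym2.eq_iff] at hq
        rcases hq with ⟨_, rfl⟩ | ⟨rfl, _⟩
        · exact hPoff _ P.start_mem_support hy
        · exact hPoff _ P.start_mem_support hx
      · exact hPoff _ (P.fst_mem_support_of_mem_edges hq) hx
      · rw [Sym2.eq_iff] at hq
        rcases hq with ⟨rfl, _⟩ | ⟨_, rfl⟩
        · exact hPoff _ P.end_mem_support hx
        · exact hPoff _ P.end_mem_support hy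
  have hWcyc : W.IsCycle := by
    rw [Walk.isCycle_def]
    refine ⟨⟨?_⟩, ?_, ?_⟩
    · rw [hW, Walk.edges_append, List.nodup_append]
      exact ⟨hQpath.isTrail.edges_nodup, hRpath.isTrail.edges_nodup, fun a ha b hb hab => hdisj a ha (hab ▸ hb)⟩
    · rw [hW, hQ, Walk.cons_append]
      exact fun h => by simpa using congrArg Walk.length h
    · have hWs : W.support.tail = Q.support.tail ++ R.support.tail := by
        rw [hW, Walk.support_append, hQs]
        rfl
      rw [hWs, List.nodup_append]
      refine ⟨by rw [hQtail] at *; exact (List.nodup_cons.1 (hQs ▸ hQnd : (g i :: (P.support ++ [g j])).Nodup)).2, hRnd.tail, ?_⟩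
      intro v hv
      rw [hQtail, List.mem_append, List.mem_singleton] at hv
      intro b hv' hvb; rw [← hvb] at hv'
      have hvC : v ∈ C := hRsubC _ (List.tail_subset _ hv')
      rcases hv with hv | rfl
      · exact hPoff _ hv hvC
      · exact hgjR hv'
  have hmaxW := hmax (g i) W hWcyc
  have hWl : W.length = Q.length + R.length := by rw [hW, Walk.length_append]
  have hsum := val_sub_add hij
  omega

/-- If the circumference `l` of `H` (length of a longest cycle) satisfies
`l > |V(H)| - δ(H)`, then `l ≥ min (2 * δ(H)) |V(H)|`. -/
theorem stmt_1 {V : Type} [Fintype V] [DecidableEq V] (H : SimpleGraph V)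
    [DecidableRel H.Adj] (l : ℕ)
    (hex : ∃ (u : V) (c : H.Walk u u), c.IsCycle ∧ c.length = l)
    (hmax : ∀ (u : V) (c : H.Walk u u), c.IsCycle → c.length ≤ l)
    (hl : Fintype.card V - H.minDegree < l) :
    min (2 * H.minDegree) (Fintype.card V) ≤ l := by
  classical
  obtain ⟨u, c, hc, hcl⟩ := hex
  have hl3 : 3 ≤ l := hcl ▸ hc.three_le_length
  haveI : NeZero l := ⟨by omega⟩
  rcases le_or_gt (Fintype.card V) l with hn | hn
  · exact le_trans (min_le_right _ _) hn
  refine le_trans (min_le_left _ _) ?_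
  set n := Fintype.card V with hndef
  set δ := H.minDegree with hδdef
  -- the cycle as a list
  set S := c.support.tail with hSdef
  have hS : S.length = l := by
    have h1 := c.length_support
    rw [hSdef, List.length_tail, h1, hcl]
    omega
  have hnd : S.Nodup := hc.support_nodup
  set g : ZMod l → V := fun i => S.getD i.val u with hgdef
  have hig : ∀ i : ZMod l, i.val < S.length := fun i => by rw [hS]; exact i.val_lt
  have hgget : ∀ i : ZMod l, g i = S.get ⟨i.val, hig i⟩ := fun i => List.getD_eq_get S u ⟨i.val, hig i⟩
  have hginj : Function.Injective g := by
    intro i i' h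
    rw [hgget, hgget] at h
    have h2 := (List.Nodup.get_inj_iff hnd).1 h
    exact ZMod.val_injective l (congrArg Fin.val h2)
  have hgmemS : ∀ i, g i ∈ S := fun i => by rw [hgget]; exact S.get_mem _
  have hgmem : ∀ i, g i ∈ c.support := fun i => by
    rw [c.support_eq_cons]; exact List.mem_cons_of_mem _ (hgmemS i)
  have hSne : S ≠ [] := by
    intro h; rw [h] at hS; simp at hS; omega
  have hSlast : S.getLast hSne = u := by
    have h1 : c.support.getLast? = some u := by
      rw [List.getLast?_eq_getLast c.support_ne_nil]
      exact congrArg some c.getLast_support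
    have h2 : (u :: S).getLast? = some u := by rw [← c.support_eq_cons]; exact h1
    have h3 : (u :: S).getLast? = S.getLast? := by
      obtain ⟨a, s, has⟩ := List.exists_cons_of_ne_nil hSne
      rw [has]
      exact List.getLast?_cons_cons
    rw [h3, List.getLast?_eq_getLast hSne] at h2
    exact Option.some.inj h2
  have huS : u ∈ S := hSlast ▸ List.getLast_mem hSne
  have hsupp_iff : ∀ v, v ∈ c.support ↔ v ∈ S := by
    intro v
    rw [c.support_eq_cons, List.mem_cons]
    constructor
    · rintro (rfl | h); exacts [huS, h]
    · exact Or.inr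
  have hcov : ∀ v, v ∈ c.support → ∃ i, g i = v := by
    intro v hv
    have hvS : v ∈ S := (hsupp_iff v).1 hv
    obtain ⟨⟨m, hm⟩, hmv⟩ := List.mem_iff_get.1 hvS
    refine ⟨(m : ZMod l), ?_⟩
    rw [hgget]
    have hml : m < l := hS ▸ hm
    have hvm : ((m : ZMod l)).val = m := ZMod.val_natCast_of_lt hml
    have : (⟨((m : ZMod l)).val, hig _⟩ : Fin S.length) = ⟨m, hm⟩ := Fin.ext hvm
    rw [this]; exact hmv
  have hchain : List.Chain' H.Adj (u :: S) := by
    have := c.isChain_adj_support; rwa [c.support_eq_cons] at this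
  have hadj : ∀ i : ZMod l, H.Adj (g i) (g (i + 1)) := by
    intro i
    have hiv := i.val_lt
    have hone : ((1 : ZMod l)).val = 1 := by
      rw [show (1 : ZMod l) = ((1 : ℕ) : ZMod l) by push_cast; rfl]
      exact ZMod.val_natCast_of_lt (by omega)
    have hadd : (i + 1).val = (i.val + 1) % l := by rw [ZMod.val_add, hone]
    have hch := List.isChain_iff_getElem.1 hchain
    have hlen : (u :: S).length = l + 1 := by simp [hS]
    by_cases hm : i.val + 1 < l
    · have h1 : (i + 1).val = i.val + 1 := by rw [hadd, Nat.mod_eq_of_lt hm]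
      have h2 := hch (i.val + 1) (by rw [hlen]; omega)
      rw [hgget i, hgget (i+1)]
      have e1 : ((u :: S).get ⟨i.val + 1, by rw [hlen]; omega⟩) = S.get ⟨i.val, hig i⟩ := rfl
      have e2 : ((u :: S).get ⟨i.val + 1 + 1, by rw [hlen]; omega⟩) = S.get ⟨i.val + 1, by rw [hS]; omega⟩ := rfl
      change H.Adj (S.get ⟨i.val, hig i⟩) (S.get ⟨i.val + 1, by rw [hS]; omega⟩) at h2
      have : (⟨(i+1).val, hig _⟩ : Fin S.length) = ⟨i.val + 1, by rw [hS]; omega⟩ := Fin.ext h1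
      rw [this]
      exact h2
    · have hival : i.val = l - 1 := by omega
      have h0 : (i + 1).val = 0 := by
        rw [hadd]
        have : i.val + 1 = l := by omega
        rw [this, Nat.mod_self]
      have hu1 : g i = u := by
        have e1 : (⟨i.val, hig i⟩ : Fin S.length) =
            ⟨S.length - 1, Nat.sub_lt (by rw [hS]; omega) (by omega)⟩ :=
          Fin.ext (by simp only [hS]; omega)
        calc g i = S.get ⟨i.val, hig i⟩ := hgget i
          _ = S.get ⟨S.length - 1, Nat.sub_lt (by rw [hS]; omega) (by omega)⟩ :=
              congrArg S.get e1
          _ = S.getLast hSne := (List.getLast_eq_getElem hSne).symm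
          _ = u := hSlast
      have hu2 : g (i + 1) = S.get ⟨0, by rw [hS]; omega⟩ := by
        rw [hgget]
        have : (⟨(i+1).val, hig _⟩ : Fin S.length) = ⟨0, by rw [hS]; omega⟩ := Fin.ext h0
        rw [this]
      rw [hu1, hu2]
      have h2 := hch 0 (by rw [hlen]; omega)
      exact h2
  -- off-cycle vertex
  have hcardS : S.toFinset.card = l := by rw [List.toFinset_card_of_nodup hnd, hS]
  have hexoff : ∃ v0, v0 ∉ c.support := by
    by_contra h
    push_neg at h
    have hsub : (Finset.univ : Finset V) ⊆ S.toFinset := by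
      intro v _
      rw [List.mem_toFinset]
      exact (hsupp_iff v).1 (h v)
    have := Finset.card_le_card hsub
    rw [hcardS, Finset.card_univ] at this
    omega
  obtain ⟨v0, hv0⟩ := hexoff
  -- longest path off the cycle
  set L : Set ℕ := {k | ∃ (x y : V) (P : H.Walk x y), P.IsPath ∧
    (∀ v ∈ P.support, v ∉ c.support) ∧ P.length = k} with hLdef
  have hL0 : 0 ∈ L := by
    refine ⟨v0, v0, Walk.nil, Walk.IsPath.nil, ?_, rfl⟩
    intro v hv
    simp only [Walk.support_nil, List.mem_singleton] at hv
    exact hv ▸ hv0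
  have hLbd : ∀ k ∈ L, k < n := by
    rintro k ⟨x, y, P, hP, _, hk⟩
    exact hk ▸ hP.length_lt
  set T : Finset ℕ := (Finset.range n).filter (· ∈ L) with hT
  have hT0 : 0 ∈ T := by
    rw [hT, Finset.mem_filter, Finset.mem_range]
    exact ⟨by omega, hL0⟩
  set t := T.max' ⟨0, hT0⟩ with htdef
  have htL : t ∈ L := by
    have h := T.max'_mem ⟨0, hT0⟩
    exact (Finset.mem_filter.1 h).2
  have hmaxT : ∀ k ∈ L, k ≤ t := by
    intro k hk
    exact T.le_max' k (by rw [hT, Finset.mem_filter, Finset.mem_range]; exact ⟨hLbd k hk, hk⟩)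
  obtain ⟨d0, dt, P, hP, hPoff, hPl⟩ := htL
  have hd0off : d0 ∉ c.support := hPoff _ P.start_mem_support
  have hdtoff : dt ∉ c.support := hPoff _ P.end_mem_support
  -- maximality at both ends
  have hext0 : ∀ w, w ∉ c.support → H.Adj w d0 → w ∈ P.support := by
    intro w hw hwadj
    by_contra hwP
    have hmem : t + 1 ∈ L := by
      refine ⟨w, dt, Walk.cons hwadj P, hP.cons hwP, ?_, by simp [hPl]⟩
      intro v hv
      rw [Walk.support_cons, List.mem_cons] at hv
      rcases hv with rfl | hv
      · exact hw
      · exact hPoff v hv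
    have := hmaxT _ hmem
    omega
  have hextt : ∀ w, w ∉ c.support → H.Adj w dt → w ∈ P.support := by
    intro w hw hwadj
    by_contra hwP
    have hwP' : w ∉ P.reverse.support := by rwa [Walk.support_reverse, List.mem_reverse]
    have hmem : t + 1 ∈ L := by
      refine ⟨w, d0, Walk.cons hwadj P.reverse, hP.reverse.cons hwP', ?_, by simp [hPl]⟩
      intro v hv
      rw [Walk.support_cons, List.mem_cons] at hv
      rcases hv with rfl | hv
      · exact hw
      · rw [Walk.support_reverse, List.mem_reverse] at hv
        exact hPoff v hv
    have := hmaxT _ hmem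
    omega
  -- size bounds
  have hPcard : P.support.toFinset.card = t + 1 := by
    rw [List.toFinset_card_of_nodup hP.support_nodup, P.length_support, hPl]
  have hPsub : P.support.toFinset ⊆ S.toFinsetᶜ := by
    intro v hv
    rw [List.mem_toFinset] at hv
    rw [Finset.mem_compl, List.mem_toFinset]
    exact fun h => hPoff v hv ((hsupp_iff v).2 h)
  have hcompl : (S.toFinsetᶜ : Finset V).card = n - l := by
    rw [Finset.card_compl, hcardS]
  have ht1 : t + 1 ≤ n - l := by
    have := Finset.card_le_card hPsub
    rw [hPcard, hcompl] at this
    exact this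
  have htδ : t + 2 ≤ δ := by omega
  -- neighbour index sets
  set A : Finset (ZMod l) := Finset.univ.filter (fun i => H.Adj d0 (g i)) with hA
  set B : Finset (ZMod l) := Finset.univ.filter (fun i => H.Adj dt (g i)) with hB
  have hdegbound : ∀ (d : V), d ∉ c.support → (∀ w, w ∉ c.support → H.Adj w d → w ∈ P.support) →
      d ∈ P.support →
      δ ≤ (Finset.univ.filter (fun i => H.Adj d (g i))).card + t := by
    intro d hdoff hextd hdP
    have hsub : H.neighborFinset d ⊆
        (Finset.univ.filter (fun i => H.Adj d (g i))).image g ∪ (P.support.toFinset.erase d) := by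
      intro v hv
      rw [SimpleGraph.mem_neighborFinset] at hv
      rw [Finset.mem_union]
      by_cases hvC : v ∈ c.support
      · obtain ⟨i, rfl⟩ := hcov v hvC
        exact Or.inl (Finset.mem_image_of_mem g (by simp [hv]))
      · refine Or.inr ?_
        rw [Finset.mem_erase, List.mem_toFinset]
        exact ⟨(H.ne_of_adj hv).symm, hextd v hvC hv.symm⟩
    have h1 := Finset.card_le_card hsub
    have h2 := Finset.card_union_le
      ((Finset.univ.filter (fun i => H.Adj d (g i))).image g) (P.support.toFinset.erase d)
    have h3 := Finset.card_image_le (s := Finset.univ.filter (fun i => H.Adj d (g i))) (f := g)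
    have h4 : (P.support.toFinset.erase d).card = t := by
      rw [Finset.card_erase_of_mem (List.mem_toFinset.2 hdP), hPcard]
      omega
    have h5 : δ ≤ H.degree d := H.minDegree_le_degree d
    rw [SimpleGraph.degree] at h5
    omega
  have hdegA : δ ≤ A.card + t := hdegbound d0 hd0off hext0 P.start_mem_support
  have hdegB : δ ≤ B.card + t := hdegbound dt hdtoff hextt P.end_mem_support
  -- spread conditions via surgery
  have hCset : ∀ i : ZMod l, g i ∈ {v | v ∈ c.support} := hgmem
  have hB2 : ∀ j ∈ B, ∀ j' ∈ B, j ≠ j' → 2 ≤ ((j' - j : ZMod l)).val := by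
    intro j hj j' hj' hne
    rw [hB, Finset.mem_filter] at hj hj'
    have h1 : H.Adj (g j) dt := hj.2.symm
    have h2 : H.Adj dt (g j') := hj'.2
    have := surg hmax {v | v ∈ c.support} g hadj hginj hCset hne
      (Walk.nil : H.Walk dt dt) Walk.IsPath.nil
      (by intro v hv; simp only [Walk.support_nil, List.mem_singleton] at hv; exact hv ▸ hdtoff)
      h1 h2
    simpa using this
  have hAcard : 2 ≤ A.card := by omega
  have hBcard : 2 ≤ B.card := by omega
  obtain ⟨x, hxA⟩ : A.Nonempty := Finset.card_pos.1 (by omega)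
  have hxadj : H.Adj (g x) d0 := by
    rw [hA, Finset.mem_filter] at hxA
    exact hxA.2.symm
  have hPoff' : ∀ v ∈ P.support, v ∉ {v | v ∈ c.support} := hPoff
  have hPoffR : ∀ v ∈ P.reverse.support, v ∉ {v | v ∈ c.support} := by
    intro v hv
    rw [Walk.support_reverse, List.mem_reverse] at hv
    exact hPoff v hv
  have hAB : ∀ j ∈ B, j ≠ x → t + 2 ≤ ((j - x : ZMod l)).val ∧ t + 2 ≤ ((x - j : ZMod l)).val := by
    intro j hj hne
    rw [hB, Finset.mem_filter] at hj
    constructor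
    · have := surg hmax {v | v ∈ c.support} g hadj hginj hCset (Ne.symm hne)
        P hP hPoff' hxadj hj.2
      omega
    · have := surg hmax {v | v ∈ c.support} g hadj hginj hCset hne
        P.reverse hP.reverse hPoffR hj.2.symm hxadj.symm
      rw [Walk.length_reverse] at this
      omega
  obtain ⟨y, hyB, hyx⟩ := Finset.exists_mem_ne (by omega : 1 < B.card) x
  have hly := hAB y hyB hyx
  have hsumxy := val_sub_add (show x ≠ y from fun h => hyx h.symm)
  have h2t4 : 2 * t + 4 ≤ l := by omega
  have hcount := count_lemma l t B h2t4 x hB2 hAB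
  omega
end

section
/- Let P = y_1 … y_l be a longest path in a graph F, and suppose every cycle in F has at most k vertices, where δ(F) ≥ m and 2m − 1 > k and additionally l ≥ 2m. Then the neighbors of the endpoints do not 'cross': if y_i ∈ N(y_1) and y_j ∈ N(y_l), then i ≤ j. -/
open SimpleGraph

variable {V : Type} {F : SimpleGraph V}

/-- Prefix of a walk up to index `n`. -/
def myPre : {a b : V} → (w : F.Walk a b) → (n : ℕ) → F.Walk a (w.getVert n)
  | _, _, Walk.nil, _ => Walk.nil
  | _, _, Walk.cons h q, 0 => Walk.nil
  | _, _, Walk.cons h q, (n+1) => Walk.cons h (myPre q n)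

/-- Suffix of a walk from index `n`. -/
def mySuf : {a b : V} → (w : F.Walk a b) → (n : ℕ) → F.Walk (w.getVert n) b
  | _, _, Walk.nil, _ => Walk.nil
  | _, _, Walk.cons h q, 0 => Walk.cons h q
  | _, _, Walk.cons h q, (n+1) => mySuf q n

lemma support_myPre : ∀ {a b : V} (w : F.Walk a b) (n : ℕ),
    (myPre w n).support = w.support.take (n+1)
  | _, _, Walk.nil, n => by cases n <;> simp [myPre]
  | _, _, Walk.cons h q, 0 => by simp [myPre]; rfl
  | _, _, Walk.cons h q, (n+1) => by
      simp [myPre, support_myPre q n]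

lemma support_mySuf : ∀ {a b : V} (w : F.Walk a b) (n : ℕ), n ≤ w.length →
    (mySuf w n).support = w.support.drop n
  | _, _, Walk.nil, 0, _ => by simp [mySuf]
  | _, _, Walk.cons h q, 0, _ => by simp [mySuf]; rfl
  | _, _, Walk.cons h q, (n+1), hn => by
      simp only [Walk.length_cons, Nat.add_le_add_iff_right] at hn
      simp [mySuf, support_mySuf q n hn]

lemma length_myPre : ∀ {a b : V} (w : F.Walk a b) (n : ℕ), n ≤ w.length →
    (myPre w n).length = n
  | _, _, Walk.nil, 0, _ => by simp [myPre]
  | _, _, Walk.cons h q, 0, _ => by simp [myPre]; rfl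
  | _, _, Walk.cons h q, (n+1), hn => by
      simp only [Walk.length_cons, Nat.add_le_add_iff_right] at hn
      simp [myPre, length_myPre q n hn]

lemma length_mySuf : ∀ {a b : V} (w : F.Walk a b) (n : ℕ), n ≤ w.length →
    (mySuf w n).length = w.length - n
  | _, _, Walk.nil, 0, _ => by simp [mySuf]
  | _, _, Walk.cons h q, 0, _ => by simp [mySuf]; rfl
  | _, _, Walk.cons h q, (n+1), hn => by
      simp only [Walk.length_cons, Nat.add_le_add_iff_right] at hn
      simp [mySuf, length_mySuf q n hn]

lemma support_getElem_eq : ∀ {a b : V} (w : F.Walk a b) (n : ℕ)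
    (h : n < w.support.length), w.support[n] = w.getVert n
  | _, _, Walk.nil, 0, _ => by simp
  | _, _, Walk.nil, (n+1), h => by simp at h
  | _, _, Walk.cons hadj q, 0, _ => by simp
  | _, _, Walk.cons hadj q, (n+1), h => by
      simp only [Walk.support_cons, List.length_cons] at h
      simpa [Walk.support_cons] using support_getElem_eq q n (by omega)

/-- In a path, an edge incident to the first vertex must go to the second vertex. -/
lemma eq_getVert_one_of_mem_edges {a b x : V} (w : F.Walk a b) (hw : w.IsPath)
    (he : s(a, x) ∈ w.edges) : x = w.getVert 1 := by
  cases w with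
  | nil => simp at he
  | cons h q =>
    rw [Walk.edges_cons, List.mem_cons] at he
    rw [Walk.cons_isPath_iff] at hw
    cases he with
    | inl h' =>
      rcases Sym2.eq_iff.mp h' with ⟨_, rfl⟩ | ⟨h1, h2⟩
      · rw [Walk.getVert_cons_succ, Walk.getVert_zero]
      · exact absurd (h1 ▸ q.start_mem_support) hw.2
    | inr h' =>
      exact absurd (Walk.fst_mem_support_of_mem_edges q h') hw.2

lemma getVert_myPre : ∀ {a b : V} (w : F.Walk a b) (n j : ℕ), j ≤ n →
    (myPre w n).getVert j = w.getVert j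
  | _, _, Walk.nil, _, _, _ => rfl
  | _, _, Walk.cons h q, 0, 0, _ => by simp [myPre]; rfl
  | _, _, Walk.cons h q, (n+1), 0, _ => by simp [myPre]
  | _, _, Walk.cons h q, (n+1), (j+1), hj => by
      simp only [myPre, Walk.getVert_cons_succ]
      exact getVert_myPre q n j (by omega)


open SimpleGraph

variable {V : Type} {F : SimpleGraph V}

/-- Non-crossing of endpoint neighborhoods on a longest path: if `P = y₁ … y_l` is a
longest path in `F`, every cycle of `F` has at most `k` vertices, `δ(F) ≥ m`,
`2m - 1 > k`, `3m ≥ 2k + 3`, and `P` has length at least `2m`, then whenever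
`y_i ∈ N(y₁)` and `y_j ∈ N(y_l)` we have `i ≤ j`. -/
theorem stmt_15 {V : Type} [Fintype V] [DecidableEq V] (F : SimpleGraph V)
    [DecidableRel F.Adj] (m k : ℕ)
    (hm : m ≤ F.minDegree) (hk : k + 1 < 2 * m) (h3m : 2 * k + 3 ≤ 3 * m)
    (y₁ yₗ : V) (p : F.Walk y₁ yₗ) (hpath : p.IsPath)
    (hmax : ∀ (u v : V) (q : F.Walk u v), q.IsPath → q.length ≤ p.length)
    (hcyc : ∀ (u : V) (c : F.Walk u u), c.IsCycle → c.length ≤ k)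
    (hlen : 2 * m ≤ p.length) :
    ∀ (i j : ℕ) (hi : i < p.support.length) (hj : j < p.support.length),
      F.Adj y₁ (p.support.get ⟨i, hi⟩) → F.Adj yₗ (p.support.get ⟨j, hj⟩) →
        i ≤ j := by
  classical
  intro i j hi hj hadj1 hadjl
  by_contra hij
  push_neg at hij
  set L := p.length with hL
  have hsuplen : p.support.length = L + 1 := p.length_support
  have hnd : p.support.Nodup := hpath.support_nodup
  set K := max k 2 with hKdef
  have hkK : k ≤ K := le_max_left _ _
  have h2K : 2 ≤ K := le_max_right _ _
  have hKor : K = k ∨ K = 2 := max_choice _ _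
  have hK2m : K ≤ 2 * m := max_le (by omega) (by omega)
  -- index injectivity
  have hinj : ∀ {s t : ℕ}, s ≤ L → t ≤ L → p.getVert s = p.getVert t → s = t := by
    intro s t hs ht hEq
    have hs' : s < p.support.length := by omega
    have ht' : t < p.support.length := by omega
    have := (hnd.getElem_inj_iff (hi := hs') (hj := ht'))
    rw [support_getElem_eq p s hs', support_getElem_eq p t ht'] at this
    exact this.mp hEq
  -- all neighbours of y₁ are on the path
  have hmem : ∀ w : V, F.Adj y₁ w → w ∈ p.support := by
    intro w hw
    by_contra hns
    have hq : (Walk.cons hw.symm p).IsPath := hpath.cons hns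
    have := hmax _ _ _ hq
    simp only [Walk.length_cons] at this
    omega
  -- small cycle bound on neighbour indices
  have hidx : ∀ t : ℕ, 1 ≤ t → t ≤ L → F.Adj y₁ (p.getVert t) → t + 1 ≤ K := by
    intro t ht1 htL hadj
    rcases eq_or_lt_of_le ht1 with h1 | h2
    · omega
    · -- t ≥ 2 : build a small cycle
      have hqpath : (myPre p t).IsPath := by
        rw [Walk.isPath_def, support_myPre]
        exact (List.take_sublist _ _).nodup hnd
      have hne : s(p.getVert t, y₁) ∉ (myPre p t).edges := by
        intro hmem'
        rw [Sym2.eq_swap] at hmem'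
        have h1 := eq_getVert_one_of_mem_edges _ hqpath hmem'
        rw [getVert_myPre p t 1 (by omega)] at h1
        exact absurd (hinj htL (by omega) h1) (by omega)
      have hc : (Walk.cons hadj.symm (myPre p t)).IsCycle :=
        (Walk.cons_isCycle_iff _ _).mpr ⟨hqpath, hne⟩
      have := hcyc _ _ hc
      rw [Walk.length_cons, length_myPre p t htL] at this
      omega
  -- minimal crossing
  set Cross : ℕ → Prop := fun d => ∃ i' j', j' < i' ∧ i' ≤ L ∧
    F.Adj y₁ (p.getVert i') ∧ F.Adj yₗ (p.getVert j') ∧ i' - j' = d with hCross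
  have hex : ∃ d, Cross d := by
    refine ⟨i - j, i, j, hij, by omega, ?_, ?_, rfl⟩
    · rw [← support_getElem_eq p i hi]; exact hadj1
    · rw [← support_getElem_eq p j hj]; exact hadjl
  obtain ⟨i₀, j₀, hlt, hiL, ha1, hal, hd⟩ := Nat.find_spec hex
  have hiK : i₀ + 1 ≤ K := hidx i₀ (by omega) hiL ha1
  have hi₀L : i₀ < L := by omega
  -- minimality: no neighbour of y₁ strictly between j₀ and i₀
  have hmin : ∀ t : ℕ, j₀ < t → t < i₀ → ¬ F.Adj y₁ (p.getVert t) := by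
    intro t h1 h2 hadj
    have hcr : Cross (t - j₀) := ⟨t, j₀, h1, by omega, hadj, hal, rfl⟩
    exact Nat.find_min hex (by omega) hcr
  -- degree count
  have hdeg : F.degree y₁ ≤ j₀ + (K - i₀) := by
    have hcard : F.degree y₁ ≤ (Finset.Icc 1 j₀ ∪ Finset.Icc i₀ (K-1)).card := by
      rw [← card_neighborFinset_eq_degree]
      apply Finset.card_le_card_of_injOn (fun w => p.support.idxOf w)
      · intro w hw
        rw [Finset.mem_coe, mem_neighborFinset] at hw
        have hws : w ∈ p.support := hmem w hw
        have htlen : p.support.idxOf w < p.support.length :=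
          List.idxOf_lt_length_iff.mpr hws
        set t := p.support.idxOf w with htdef
        have hgt : p.getVert t = w := by
          rw [← support_getElem_eq p t htlen]
          exact List.getElem_idxOf htlen
        have ht0 : t ≠ 0 := by
          intro h0
          rw [h0, p.getVert_zero] at hgt
          exact hw.ne' hgt.symm
        have htL : t ≤ L := by omega
        have htK : t + 1 ≤ K := hidx t (by omega) htL (hgt ▸ hw)
        have hnotmid : ¬ (j₀ < t ∧ t < i₀) := by
          rintro ⟨h1, h2⟩
          exact hmin t h1 h2 (hgt ▸ hw)
        simp only [Finset.mem_coe, Finset.mem_union, Finset.mem_Icc]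
        omega
      · intro w1 hw1 w2 hw2 heq
        have h1 : w1 ∈ p.support := hmem w1 ((mem_neighborFinset F y₁ w1).mp hw1)
        have h2 : w2 ∈ p.support := hmem w2 ((mem_neighborFinset F y₁ w2).mp hw2)
        have e1 := List.getElem_idxOf (List.idxOf_lt_length_iff.mpr h1)
        have e2 := List.getElem_idxOf (List.idxOf_lt_length_iff.mpr h2)
        rw [← e1, ← e2]
        simp only [heq]
    have hA : (Finset.Icc 1 j₀ ∪ Finset.Icc i₀ (K-1)).card ≤ j₀ + (K - i₀) := by
      calc (Finset.Icc 1 j₀ ∪ Finset.Icc i₀ (K-1)).card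
          ≤ (Finset.Icc 1 j₀).card + (Finset.Icc i₀ (K-1)).card :=
            Finset.card_union_le _ _
        _ = (j₀ + 1 - 1) + (K - 1 + 1 - i₀) := by rw [Nat.card_Icc, Nat.card_Icc]
        _ ≤ j₀ + (K - i₀) := by omega
    omega
  have hcount : m ≤ j₀ + (K - i₀) := le_trans (le_trans hm (F.minDegree_le_degree y₁)) hdeg
  -- the long cycle
  have hj₀L : j₀ ≤ L := by omega
  have e1 : F.Adj (p.getVert j₀) yₗ := hal.symm
  set Q : F.Walk y₁ (p.getVert i₀) :=
    (myPre p j₀).append (Walk.cons e1 (mySuf p i₀).reverse) with hQdef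
  have hQsup : Q.support = p.support.take (j₀+1) ++ (p.support.drop i₀).reverse := by
    rw [hQdef, Walk.support_append, Walk.support_cons, List.tail_cons,
      Walk.support_reverse, support_mySuf p i₀ hiL, support_myPre]
  have hQpath : Q.IsPath := by
    rw [Walk.isPath_def, hQsup]
    refine List.Nodup.append ((List.take_sublist _ _).nodup hnd)
      (List.nodup_reverse.mpr ((List.drop_sublist _ _).nodup hnd)) ?_
    intro a ha hb
    exact List.disjoint_take_drop hnd (by omega : j₀ + 1 ≤ i₀) ha (List.mem_reverse.mp hb)
  have hne : s(p.getVert i₀, y₁) ∉ Q.edges := by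
    intro hmem'
    rw [hQdef, Walk.edges_append, Walk.edges_cons, List.mem_append, List.mem_cons] at hmem'
    rcases hmem' with h1 | h2 | h3
    · have hsup := Walk.fst_mem_support_of_mem_edges _ h1
      rw [support_myPre] at hsup
      obtain ⟨r, hr, hget⟩ := List.mem_iff_getElem.mp hsup
      rw [List.length_take] at hr
      rw [List.getElem_take] at hget
      have hr' : r < p.support.length := by omega
      rw [support_getElem_eq p r hr'] at hget
      have hri : r = i₀ := hinj (by omega) hiL hget
      omega
    · rcases Sym2.eq_iff.mp h2 with ⟨hx, hy⟩ | ⟨hx, hy⟩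
      · exact absurd (hinj hiL hj₀L hx) (by omega)
      · refine absurd (hinj hiL le_rfl ?_) (by omega)
        rw [p.getVert_length]; exact hx
    · rw [Walk.edges_reverse, List.mem_reverse] at h3
      have hsup := Walk.snd_mem_support_of_mem_edges _ h3
      rw [support_mySuf p i₀ hiL] at hsup
      obtain ⟨r, hr, hget⟩ := List.mem_iff_getElem.mp hsup
      rw [List.getElem_drop] at hget
      have hr' : i₀ + r < p.support.length := by
        rw [List.length_drop] at hr; omega
      rw [support_getElem_eq p (i₀ + r) hr'] at hget
      rw [List.length_drop] at hr
      have h0 : i₀ + r = 0 := hinj (by omega) (by omega) (by rw [p.getVert_zero]; exact hget)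
      omega
  have hC : (Walk.cons ha1.symm Q).IsCycle :=
    (Walk.cons_isCycle_iff _ _).mpr ⟨hQpath, hne⟩
  have hCk := hcyc _ _ hC
  have hClen : (Walk.cons ha1.symm Q).length = j₀ + 1 + (L - i₀) + 1 := by
    rw [Walk.length_cons, hQdef, Walk.length_append, Walk.length_cons,
      Walk.length_reverse, length_myPre p j₀ hj₀L, length_mySuf p i₀ hiL]
    omega
  rw [hClen] at hCk
  omega
end
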